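/- Let X be a compact connected metric space with H¹(X) < ∞. Then there exists a Lipschitz surjection f : [0,1] → X. -/

import Mathlib

open MeasureTheory Metric Filter Set
open scoped ENNReal NNReal Topology

set_option linter.unusedVariables false
set_option linter.unusedSectionVars false

section Aux

variable {X : Type*}

/-- There is a chain of length `n` from `a` to `x` inside `S` w.r.t. relation `r`. -/
def ChainIn (r : X → X → Prop) (S : Finset X) (a x : X) (n : ℕ) : Prop :=
  ∃ g : ℕ → X, g 0 = a ∧ g n = x ∧ (∀ i ≤ n, g i ∈ S) ∧ ∀ i < n, r (g i) (g (i+1))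


lemma walk_lemma (r : X → X → Prop) (hsymm : ∀ a b, r a b → r b a) :
    ∀ (N : ℕ) (S : Finset X), S.card = N → ∀ a ∈ S,
    (∀ x ∈ S, ∃ n, ChainIn r S a x n) →
    ∃ (M : ℕ) (p : ℕ → X), (∀ i ≤ M, p i ∈ S) ∧ (∀ x ∈ S, ∃ i ≤ M, p i = x) ∧
      (∀ i < M, r (p i) (p (i+1))) ∧ M + 1 ≤ 2 * S.card := by
  intro N
  induction N using Nat.strong_induction_on with
  | _ N IH =>
  intro S hcard a ha hconn
  rcases le_or_gt S.card 1 with h1 | h1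
  · -- S = {a}
    refine ⟨0, fun _ => a, fun i _ => ha, fun x hx => ⟨0, le_refl 0, ?_⟩, by omega, by
      have : 1 ≤ S.card := Finset.card_pos.mpr ⟨a, ha⟩; omega⟩
    have : S = {a} := Finset.eq_singleton_iff_unique_mem.mpr
      ⟨ha, fun y hy => Finset.card_le_one.mp h1 y hy a ha⟩
    rw [this] at hx; simpa using (Finset.mem_singleton.mp hx).symm
  · classical
    set D : X → ℕ := fun x => sInf {n | ChainIn r S a x n} with hD
    have hne : ∀ x ∈ S, {n | ChainIn r S a x n}.Nonempty := fun x hx => hconn x hx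
    have hDmem : ∀ x ∈ S, ChainIn r S a x (D x) := fun x hx => Nat.sInf_mem (hne x hx)
    have hDa : D a = 0 := by
      have : ChainIn r S a a 0 := ⟨fun _ => a, rfl, rfl, fun i hi => by
        simpa [Nat.le_zero.mp hi] using ha, fun i hi => absurd hi (Nat.not_lt_zero i)⟩
      exact Nat.sInf_eq_zero.mpr (Or.inl this)
    obtain ⟨u, hu, hmax⟩ := S.exists_max_image D ⟨a, ha⟩
    have hDupos : 1 ≤ D u := by
      obtain ⟨b, hb, hba⟩ := Finset.exists_mem_ne h1 a
      have hb0 : D b ≠ 0 := by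
        intro h0
        have : ChainIn r S a b 0 := by
          have := hDmem b hb; rwa [h0] at this
        obtain ⟨g, hg0, hgn, -, -⟩ := this
        exact hba (hgn ▸ hg0 ▸ rfl)
      have := hmax b hb
      omega
    have hua : u ≠ a := fun h => by rw [h, hDa] at hDupos; omega
    -- prefix property
    have hprefix : ∀ x ∈ S, ∀ g : ℕ → X, ∀ n, g 0 = a → g n = x → (∀ i ≤ n, g i ∈ S) →
        (∀ i < n, r (g i) (g (i+1))) → ∀ i ≤ n, D (g i) ≤ i := by
      intro x hx g n hg0 hgn hgS hgr i hi
      exact Nat.sInf_le ⟨g, hg0, rfl, fun j hj => hgS j (le_trans hj hi),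
        fun j hj => hgr j (lt_of_lt_of_le hj hi)⟩
    obtain ⟨gu, hgu0, hgun, hguS, hgur⟩ := hDmem u hu
    set w : X := gu (D u - 1) with hw
    have hwS : w ∈ S := hguS _ (by omega)
    have hrwu : r w u := by
      have := hgur (D u - 1) (by omega)
      rw [show D u - 1 + 1 = D u by omega, hgun] at this
      exact this
    have hwu : w ≠ u := by
      intro h
      have : D w ≤ D u - 1 := hprefix u hu gu (D u) hgu0 hgun hguS hgur _ (by omega)
      rw [h] at this; omega
    set S' : Finset X := S.erase u with hS'
    have haS' : a ∈ S' := Finset.mem_erase.mpr ⟨Ne.symm hua, ha⟩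
    have hwS' : w ∈ S' := Finset.mem_erase.mpr ⟨hwu, hwS⟩
    have hcard' : S'.card = N - 1 := by rw [hS', Finset.card_erase_of_mem hu, hcard]
    have hconn' : ∀ x ∈ S', ∃ n, ChainIn r S' a x n := by
      intro x hxS'
      obtain ⟨hxu, hxS⟩ := Finset.mem_erase.mp hxS'
      obtain ⟨g, hg0, hgn, hgS, hgr⟩ := hDmem x hxS
      refine ⟨D x, g, hg0, hgn, fun i hi => Finset.mem_erase.mpr ⟨?_, hgS i hi⟩, hgr⟩
      intro hgiu
      have h1' : D u ≤ i := hgiu ▸ hprefix x hxS g (D x) hg0 hgn hgS hgr i hi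
      have h2' : D x ≤ D u := hmax x hxS
      have : i = D x := by omega
      exact hxu (by rw [← hgn, ← this, hgiu])
    obtain ⟨M', p, hpS, hpcov, hpr, hplen⟩ :=
      IH (N - 1) (by omega) S' hcard' a haS' hconn'
    obtain ⟨i₀, hi₀M, hi₀⟩ := hpcov w hwS'
    refine ⟨M' + 2, fun k => if k ≤ i₀ then p k else if k = i₀ + 1 then u else p (k - 2),
      ?_, ?_, ?_, ?_⟩
    · intro k hk
      by_cases h1k : k ≤ i₀
      · simp only [if_pos h1k]; exact Finset.mem_of_mem_erase (hpS k (le_trans h1k hi₀M))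
      · by_cases h2k : k = i₀ + 1
        · simp only [if_neg h1k, if_pos h2k]; exact hu
        · simp only [if_neg h1k, if_neg h2k]
          exact Finset.mem_of_mem_erase (hpS (k - 2) (by omega))
    · intro x hx
      by_cases hxu : x = u
      · exact ⟨i₀ + 1, by omega, by simp [hxu]⟩
      · obtain ⟨i, hiM, hpi⟩ := hpcov x (Finset.mem_erase.mpr ⟨hxu, hx⟩)
        by_cases hii : i ≤ i₀
        · exact ⟨i, by omega, by simp [hii, hpi]⟩
        · exact ⟨i + 2, by omega, by
            simp only [if_neg (show ¬ i + 2 ≤ i₀ by omega),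
              if_neg (show ¬ i + 2 = i₀ + 1 by omega)]
            simpa using hpi⟩
    · intro k hk
      rcases lt_trichotomy k i₀ with hlt | heq | hgt
      · simp only [if_pos (le_of_lt hlt), if_pos (show k + 1 ≤ i₀ by omega)]
        exact hpr k (by omega)
      · subst heq
        simp only [if_pos (le_refl k), if_neg (show ¬ k + 1 ≤ k by omega), if_pos rfl, hi₀]
        exact hrwu
      · by_cases h2k : k = i₀ + 1
        · subst h2k
          simp only [if_neg (show ¬ i₀ + 1 ≤ i₀ by omega), if_pos rfl,
            if_neg (show ¬ i₀ + 1 + 1 ≤ i₀ by omega), if_neg (show ¬ i₀ + 1 + 1 = i₀ + 1 by omega),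
            show i₀ + 1 + 1 - 2 = i₀ by omega, hi₀]
          exact hsymm _ _ hrwu
        · simp only [if_neg (show ¬ k ≤ i₀ by omega), if_neg h2k,
            if_neg (show ¬ k + 1 ≤ i₀ by omega), if_neg (show ¬ k + 1 = i₀ + 1 by omega),
            show k + 1 - 2 = k - 2 + 1 by omega]
          exact hpr (k - 2) (by omega)
    · have : 1 ≤ S'.card := Finset.card_pos.mpr ⟨a, haS'⟩
      omega


end Aux

section Metric

variable {X : Type*} [MetricSpace X] [MeasurableSpace X] [BorelSpace X] [ConnectedSpace X]


lemma mass_lemma {X : Type*} [MetricSpace X] [MeasurableSpace X] [BorelSpace X]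
    [ConnectedSpace X] (x : X) (r : ℝ) (hr : 0 ≤ r) (hy : ∃ y : X, r ≤ dist x y) :
    ENNReal.ofReal r ≤ μH[1] (closedBall x r) := by
  obtain ⟨y, hy⟩ := hy
  set g : X → ℝ := fun z => dist x z with hg
  have hlip : LipschitzWith 1 g := LipschitzWith.dist_right x
  have hsub : Icc (0:ℝ) r ⊆ g '' (closedBall x r) := by
    have hconn : IsPreconnected (g '' univ) :=
      isPreconnected_univ.image g hlip.continuous.continuousOn
    have h0 : (0:ℝ) ∈ g '' univ := ⟨x, trivial, by simp [hg]⟩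
    have hdy : dist x y ∈ g '' univ := ⟨y, trivial, rfl⟩
    intro s hs
    obtain ⟨z, -, hz⟩ := hconn.Icc_subset h0 hdy ⟨hs.1, le_trans hs.2 hy⟩
    exact ⟨z, by simp only [mem_closedBall, dist_comm z x]; simp only [hg] at hz; linarith [hs.2], hz⟩
  calc ENNReal.ofReal r = volume (Icc (0:ℝ) r) := by simp [Real.volume_Icc, hr]
    _ = μH[1] (Icc (0:ℝ) r) := by rw [MeasureTheory.hausdorffMeasure_real]
    _ ≤ μH[1] (g '' (closedBall x r)) := measure_mono hsub
    _ ≤ (1:NNReal) ^ (1:ℝ) * μH[1] (closedBall x r) :=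
        hlip.hausdorffMeasure_image_le (by norm_num) _
    _ = μH[1] (closedBall x r) := by simp

lemma sep_bound {X : Type*} [MetricSpace X] [MeasurableSpace X] [BorelSpace X]
    [ConnectedSpace X] (ε : ℝ) (hε : 0 < ε) (S : Finset X)
    (hsep : ∀ x ∈ S, ∀ y ∈ S, x ≠ y → ε ≤ dist x y) (hcard : 2 ≤ S.card) :
    (S.card : ℝ≥0∞) * ENNReal.ofReal (ε/3) ≤ μH[1] (univ : Set X) := by
  have hdisj : (S : Set X).PairwiseDisjoint (fun x => closedBall x (ε/3)) := by
    intro x hx y hy hxy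
    apply closedBall_disjoint_closedBall
    have := hsep x hx y hy hxy
    linarith
  have hmeas : ∀ x ∈ S, MeasurableSet (closedBall x (ε/3)) :=
    fun x _ => measurableSet_closedBall
  have hball : ∀ x ∈ S, ENNReal.ofReal (ε/3) ≤ μH[1] (closedBall x (ε/3)) := by
    intro x hx
    apply mass_lemma x _ (by linarith)
    obtain ⟨y, hy, hxy⟩ := Finset.exists_mem_ne (s := S) (by omega) x
    exact ⟨y, le_trans (by linarith) (dist_comm y x ▸ hsep y hy x hx hxy)⟩
  calc (S.card : ℝ≥0∞) * ENNReal.ofReal (ε/3)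
      = ∑ x ∈ S, ENNReal.ofReal (ε/3) := by simp [mul_comm]
    _ ≤ ∑ x ∈ S, μH[1] (closedBall x (ε/3)) := Finset.sum_le_sum hball
    _ = μH[1] (⋃ x ∈ S, closedBall x (ε/3)) := (measure_biUnion_finset hdisj hmeas).symm
    _ ≤ μH[1] (univ : Set X) := measure_mono (subset_univ _)


variable [CompactSpace X]


/-- universal cardinality bound for separated sets -/
lemma sep_card_le (hlen : μH[1] (univ : Set X) < ⊤) (ε : ℝ) (hε : 0 < ε) (S : Finset X)
    (hsep : ∀ x ∈ S, ∀ y ∈ S, x ≠ y → ε ≤ dist x y) :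
    S.card ≤ ⌈3 * (μH[1] (univ : Set X)).toReal / ε⌉₊ + 1 := by
  rcases le_or_gt S.card 1 with h | h
  · omega
  · have hb := sep_bound ε hε S hsep (by omega)
    have hreal : (S.card : ℝ) * (ε/3) ≤ (μH[1] (univ : Set X)).toReal := by
      have := ENNReal.toReal_mono hlen.ne hb
      rwa [ENNReal.toReal_mul, ENNReal.toReal_natCast, ENNReal.toReal_ofReal (show (0:ℝ) ≤ ε/3 by linarith)] at this
    have : (S.card : ℝ) ≤ 3 * (μH[1] (univ : Set X)).toReal / ε := by
      rw [le_div_iff₀ hε]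
      nlinarith
    calc S.card ≤ ⌈3 * (μH[1] (univ : Set X)).toReal / ε⌉₊ :=
          Nat.cast_le.mp (le_trans this (Nat.le_ceil _))
      _ ≤ _ := by omega

/-- existence of a maximal separated net -/
lemma exists_net (hlen : μH[1] (univ : Set X) < ⊤) (ε : ℝ) (hε : 0 < ε) :
    ∃ S : Finset X, S.Nonempty ∧ (∀ x ∈ S, ∀ y ∈ S, x ≠ y → ε ≤ dist x y) ∧
      ∀ x : X, ∃ s ∈ S, dist x s < ε := by
  classical
  set B := ⌈3 * (μH[1] (univ : Set X)).toReal / ε⌉₊ + 1 with hB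
  set P : ℕ → Prop := fun n => ∃ S : Finset X,
    (∀ x ∈ S, ∀ y ∈ S, x ≠ y → ε ≤ dist x y) ∧ S.card = n with hP
  have hP1 : P 1 := ⟨{Classical.arbitrary X}, by simp, by simp⟩
  have h1B : 1 ≤ B := by omega
  set N := Nat.findGreatest P B with hN
  have hN1 : 1 ≤ N := Nat.le_findGreatest h1B hP1
  obtain ⟨S, hsep, hcard⟩ : P N := Nat.findGreatest_spec h1B hP1
  refine ⟨S, Finset.card_pos.mp (by omega), hsep, ?_⟩
  intro x
  by_contra hx
  push_neg at hx
  have hxS : x ∉ S := fun h => by have := hx x h; rw [dist_self] at this; linarith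
  have hsep' : ∀ p ∈ insert x S, ∀ q ∈ insert x S, p ≠ q → ε ≤ dist p q := by
    intro p hp q hq hpq
    rcases Finset.mem_insert.mp hp with hp' | hp' <;>
      rcases Finset.mem_insert.mp hq with hq' | hq'
    · exact absurd (hp'.trans hq'.symm) hpq
    · rw [hp']; exact hx q hq'
    · rw [hq', dist_comm]; exact hx p hp'
    · exact hsep p hp' q hq' hpq
  have hPN1 : P (N + 1) := ⟨insert x S, hsep', by rw [Finset.card_insert_of_notMem hxS, hcard]⟩
  have hle : N + 1 ≤ B := by
    obtain ⟨T, hT, hTc⟩ := hPN1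
    have := sep_card_le hlen ε hε T hT
    omega
  exact Nat.findGreatest_is_greatest (by omega) hle hPN1

/-- chain connectivity of the net at scale 2ε -/
lemma net_conn (ε : ℝ) (hε : 0 < ε) (S : Finset X)
    (hnet : ∀ x : X, ∃ s ∈ S, dist x s < ε) (a : X) (ha : a ∈ S) :
    ∀ x ∈ S, ∃ n, ChainIn (fun u v => dist u v < 2*ε) S a x n := by
  classical
  set A : Finset X := S.filter (fun x => ∃ n, ChainIn (fun u v => dist u v < 2*ε) S a x n)
    with hA
  have haA : a ∈ A := Finset.mem_filter.mpr ⟨ha, 0, fun _ => a, rfl, rfl,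
    fun i hi => by simpa [Nat.le_zero.mp hi] using ha, fun i hi => absurd hi (Nat.not_lt_zero i)⟩
  by_contra hcon
  push_neg at hcon
  obtain ⟨b, hbS, hbn⟩ := hcon
  have hbB : b ∈ S \ A := Finset.mem_sdiff.mpr ⟨hbS, fun h => by obtain ⟨n, hn⟩ := (Finset.mem_filter.mp h).2; exact hbn n hn⟩
  set U : Set X := ⋃ s ∈ A, ball s ε with hU
  set V : Set X := ⋃ s ∈ (S \ A), ball s ε with hV
  have hUopen : IsOpen U := isOpen_biUnion fun _ _ => isOpen_ball
  have hVopen : IsOpen V := isOpen_biUnion fun _ _ => isOpen_ball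
  have hcover : (univ : Set X) ⊆ U ∪ V := by
    intro z _
    obtain ⟨s, hs, hzs⟩ := hnet z
    by_cases hsA : s ∈ A
    · exact Or.inl (mem_biUnion hsA (mem_ball.mpr hzs))
    · exact Or.inr (mem_biUnion (Finset.mem_sdiff.mpr ⟨hs, hsA⟩)
        (mem_ball.mpr hzs))
  have hUne : ((univ : Set X) ∩ U).Nonempty :=
    ⟨a, trivial, mem_biUnion haA (mem_ball_self hε)⟩
  have hVne : ((univ : Set X) ∩ V).Nonempty :=
    ⟨b, trivial, mem_biUnion hbB (mem_ball_self hε)⟩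
  obtain ⟨z, -, hzU, hzV⟩ := isPreconnected_univ U V hUopen hVopen hcover hUne hVne
  obtain ⟨s₁, hs₁A, hzs₁⟩ := mem_iUnion₂.mp hzU
  obtain ⟨s₂, hs₂B, hzs₂⟩ := mem_iUnion₂.mp hzV
  have hfil := Finset.mem_filter.mp hs₁A
  have hs₁S := hfil.1
  obtain ⟨n, g, hg0, hgn, hgS, hgr⟩ := hfil.2
  obtain ⟨hs₂S, hs₂A⟩ := Finset.mem_sdiff.mp hs₂B
  have hd12 : dist s₁ s₂ < 2*ε := by
    have h1 := mem_ball.mp hzs₁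
    have h2 := mem_ball.mp hzs₂
    calc dist s₁ s₂ ≤ dist s₁ z + dist z s₂ := dist_triangle _ _ _
      _ < ε + ε := by rw [dist_comm s₁ z]; exact add_lt_add h1 h2
      _ = 2*ε := by ring
  apply hs₂A
  refine Finset.mem_filter.mpr ⟨hs₂S, n + 1, fun i => if i ≤ n then g i else s₂, by simp [hg0],
    by simp, ?_, ?_⟩
  · intro i hi
    by_cases h : i ≤ n
    · simp only [if_pos h]; exact hgS i h
    · simp only [if_neg h]; exact hs₂S
  · intro i hi
    rcases lt_or_eq_of_le (Nat.lt_succ_iff.mp hi) with h | h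
    · simp only [if_pos (le_of_lt h), if_pos (Nat.succ_le_of_lt h)]; exact hgr i h
    · subst h
      simp only [if_pos (le_refl i), if_neg (show ¬ i + 1 ≤ i by omega), hgn]
      exact hd12

lemma approx_map (hlen : μH[1] (univ : Set X) < ⊤) (ε : ℝ) (hε : 0 < ε) (hε1 : ε ≤ 1) :
    ∃ f : ℝ → X,
      (∀ s ∈ Icc (0:ℝ) 1, ∀ t ∈ Icc (0:ℝ) 1,
        dist (f s) (f t) ≤ (12 * (μH[1] (univ : Set X)).toReal + 2) * dist s t + 2*ε) ∧
      ∀ x : X, ∃ t ∈ Icc (0:ℝ) 1, dist x (f t) < ε := by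
  set L : ℝ := (μH[1] (univ : Set X)).toReal with hL
  have hL0 : 0 ≤ L := ENNReal.toReal_nonneg
  set K : ℝ := 12 * L + 2 with hK
  obtain ⟨S, hSne, hsep, hnet⟩ := exists_net hlen ε hε
  obtain ⟨a, ha⟩ := hSne
  obtain ⟨M, p, hpS, hpcov, hpr, hplen⟩ := walk_lemma (fun u v => dist u v < 2*ε)
    (fun u v h => by rwa [dist_comm] at h) S.card S rfl a ha (net_conn ε hε S hnet a ha)
  -- uniform bound on 2εM
  have hMbound : 2 * ε * M ≤ K := by
    rcases le_or_gt S.card 1 with hN | hN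
    · have hM1 : M ≤ 1 := by omega
      calc 2 * ε * M ≤ 2 * ε * 1 := by
            apply mul_le_mul_of_nonneg_left _ (by linarith)
            exact_mod_cast hM1
        _ ≤ K := by rw [hK]; nlinarith
    · have hb := sep_bound ε hε S hsep (by omega)
      have hreal : (S.card : ℝ) * (ε/3) ≤ L := by
        have := ENNReal.toReal_mono hlen.ne hb
        rwa [ENNReal.toReal_mul, ENNReal.toReal_natCast,
          ENNReal.toReal_ofReal (show (0:ℝ) ≤ ε/3 by linarith)] at this
      have hM2N : (M : ℝ) ≤ 2 * S.card := by
        have : (M + 1 : ℝ) ≤ 2 * S.card := by exact_mod_cast hplen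
        linarith
      calc 2 * ε * M ≤ 2 * ε * (2 * S.card) := by
            apply mul_le_mul_of_nonneg_left hM2N (by linarith)
        _ = 4 * ((S.card : ℝ) * ε) := by ring
        _ ≤ 4 * (3 * L) := by
            apply mul_le_mul_of_nonneg_left _ (by norm_num)
            nlinarith
        _ ≤ K := by rw [hK]; linarith
  -- chain distance bound
  have hchain : ∀ i k, i + k ≤ M → dist (p i) (p (i + k)) ≤ 2 * ε * k := by
    intro i k
    induction k with
    | zero => intro _; simp
    | succ k ihk =>
      intro hik
      have h1 := ihk (by omega)
      have h2 : dist (p (i+k)) (p (i+k+1)) < 2*ε := hpr (i+k) (by omega)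
      calc dist (p i) (p (i + (k+1))) ≤ dist (p i) (p (i+k)) + dist (p (i+k)) (p (i+k+1)) := by
            rw [show i + (k+1) = i + k + 1 by omega]; exact dist_triangle _ _ _
        _ ≤ 2*ε*k + 2*ε := by linarith
        _ = 2*ε*((k:ℝ)+1) := by ring
        _ = 2*ε*((k+1 : ℕ) : ℝ) := by push_cast; ring
  classical
  refine ⟨fun t => p ⌊t * M⌋₊, ?_, ?_⟩
  · have key : ∀ s t : ℝ, s ∈ Icc (0:ℝ) 1 → t ∈ Icc (0:ℝ) 1 → s ≤ t →
        dist (p ⌊s*M⌋₊) (p ⌊t*M⌋₊) ≤ K * (t - s) + 2*ε := by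
      intro s t hs ht hst
      have hM0 : (0:ℝ) ≤ M := Nat.cast_nonneg M
      set i := ⌊s*M⌋₊ with hi
      set j := ⌊t*M⌋₊ with hj
      have hij : i ≤ j := Nat.floor_mono (by nlinarith)
      have hjM : j ≤ M := by
        have h1 : t*(M:ℝ) ≤ (M:ℝ) := by nlinarith [ht.2]
        calc j ≤ ⌊(M:ℝ)⌋₊ := Nat.floor_mono h1
          _ = M := Nat.floor_natCast M
      have hd := hchain i (j - i) (by omega)
      rw [show i + (j - i) = j by omega] at hd
      have hji : ((j - i : ℕ) : ℝ) ≤ M * (t - s) + 1 := by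
        have h1 : (j:ℝ) ≤ t*M := Nat.floor_le (by nlinarith [ht.1])
        have h2 : s*M < i + 1 := Nat.lt_floor_add_one _
        rw [Nat.cast_sub hij]
        nlinarith
      calc dist (p i) (p j) ≤ 2*ε*((j-i:ℕ):ℝ) := hd
        _ ≤ 2*ε*(M*(t-s)+1) := mul_le_mul_of_nonneg_left hji (by linarith)
        _ = (2*ε*(M:ℝ))*(t-s) + 2*ε := by ring
        _ ≤ K*(t-s) + 2*ε := by nlinarith [sub_nonneg.mpr hst]
    intro s hs t ht
    rcases le_total s t with h | h
    · have hk := key s t hs ht h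
      have habs : dist s t = t - s := by rw [Real.dist_eq, abs_of_nonpos (by linarith)]; ring
      show dist (p ⌊s * ↑M⌋₊) (p ⌊t * ↑M⌋₊) ≤ K * dist s t + 2*ε
      rw [habs]
      exact hk
    · have hk := key t s ht hs h
      have habs : dist s t = s - t := by rw [Real.dist_eq, abs_of_nonneg (by linarith)]
      show dist (p ⌊s * ↑M⌋₊) (p ⌊t * ↑M⌋₊) ≤ K * dist s t + 2*ε
      rw [dist_comm, habs]
      exact hk
  · intro x
    obtain ⟨sx, hsxS, hdx⟩ := hnet x
    obtain ⟨i, hiM, hpi⟩ := hpcov sx hsxS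
    refine ⟨(i : ℝ) / M, ⟨by positivity, ?_⟩, ?_⟩
    · rcases Nat.eq_zero_or_pos M with h0 | h0
      · have hi0 : i = 0 := by omega
        simp [h0, hi0]
      · rw [div_le_one (by exact_mod_cast h0)]
        exact_mod_cast hiM
    · have heq : p ⌊((i:ℝ)/M) * M⌋₊ = p i := by
        rcases Nat.eq_zero_or_pos M with h0 | h0
        · have hi0 : i = 0 := by omega
          simp [h0, hi0]
        · rw [div_mul_cancel₀ _ (show (M:ℝ) ≠ 0 by exact_mod_cast h0.ne'), Nat.floor_natCast]
      simp only [heq, hpi]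
      exact hdx


end Metric


/-- A compact connected metric space of finite one-dimensional Hausdorff measure is
the image of a Lipschitz map from [0,1]. -/

theorem stmt_4 {X : Type*} [MetricSpace X] [MeasurableSpace X] [BorelSpace X]
    [CompactSpace X] [ConnectedSpace X]
    (hlen : μH[1] (univ : Set X) < ⊤) :
    ∃ (L : NNReal) (f : ℝ → X),
      LipschitzOnWith L f (Icc 0 1) ∧ f '' (Icc 0 1) = univ := by
  classical
  set K : ℝ := 12 * (μH[1] (univ : Set X)).toReal + 2 with hKdef
  have hK0 : 0 ≤ K := by positivity
  set Kn : ℝ≥0 := K.toNNReal with hKn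
  have hKnK : (Kn : ℝ) = K := Real.coe_toNNReal K hK0
  set ε : ℕ → ℝ := fun n => 1 / (n + 1) with hε
  have hεpos : ∀ n, 0 < ε n := fun n => by positivity
  have hε1 : ∀ n, ε n ≤ 1 := fun n => by
    rw [hε]; rw [div_le_one (by positivity)]; simp
  have hεlim : Tendsto ε atTop (𝓝 0) := tendsto_one_div_add_atTop_nhds_zero_nat
  choose F hF1 hF2 using fun n => approx_map hlen (ε n) (hεpos n) (hε1 n)
  set U : Ultrafilter ℕ := Ultrafilter.of atTop with hU
  have hUle : (U : Filter ℕ) ≤ atTop := Ultrafilter.of_le atTop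
  have hεU : Tendsto ε U (𝓝 0) := hεlim.mono_left hUle
  -- pointwise ultrafilter limit
  have hconv : ∀ t : ℝ, ∃ x : X, Tendsto (fun n => F n t) U (𝓝 x) := by
    intro t
    obtain ⟨x, -, hx⟩ := isCompact_univ.ultrafilter_le_nhds (U.map (fun n => F n t))
      (by simp [le_principal_iff])
    exact ⟨x, hx⟩
  choose f hf using hconv
  have hlip : ∀ s ∈ Icc (0:ℝ) 1, ∀ t ∈ Icc (0:ℝ) 1, dist (f s) (f t) ≤ K * dist s t := by
    intro s hs t ht
    have h1 : Tendsto (fun n => dist (F n s) (F n t)) U (𝓝 (dist (f s) (f t))) :=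
      (hf s).dist (hf t)
    have h2 : Tendsto (fun n => K * dist s t + 2 * ε n) U (𝓝 (K * dist s t + 2 * 0)) :=
      tendsto_const_nhds.add (tendsto_const_nhds.mul hεU)
    have h3 := le_of_tendsto_of_tendsto' h1 h2 (fun n => hF1 n s hs t ht)
    simpa using h3
  refine ⟨Kn, f, LipschitzOnWith.of_dist_le_mul (by rwa [hKnK]), ?_⟩
  apply Subset.antisymm (subset_univ _)
  intro x _
  choose tseq htIcc htdist using fun n => hF2 n x
  obtain ⟨t₀, ht₀Icc, ht₀⟩ := isCompact_Icc.ultrafilter_le_nhds (U.map tseq)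
    (by rw [Ultrafilter.coe_map, le_principal_iff, mem_map]; exact univ_mem' htIcc)
  have ht₀T : Tendsto tseq U (𝓝 t₀) := ht₀
  refine ⟨t₀, ht₀Icc, ?_⟩
  have hgoal : dist (f t₀) x ≤ 0 := by
    have h1 : Tendsto (fun n => dist (f t₀) (F n t₀)
        + (K * dist t₀ (tseq n) + 2 * ε n) + ε n) U
        (𝓝 (dist (f t₀) (f t₀) + (K * dist t₀ t₀ + 2 * 0) + 0)) := by
      refine Tendsto.add (Tendsto.add (tendsto_const_nhds.dist (hf t₀)) ?_) hεU
      exact (tendsto_const_nhds.mul (tendsto_const_nhds.dist ht₀T)).add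
        (tendsto_const_nhds.mul hεU)
    have h2 : ∀ n, dist (f t₀) x ≤ dist (f t₀) (F n t₀)
        + (K * dist t₀ (tseq n) + 2 * ε n) + ε n := by
      intro n
      have ha := hF1 n t₀ ht₀Icc (tseq n) (htIcc n)
      have hb := htdist n
      calc dist (f t₀) x ≤ dist (f t₀) (F n t₀) + dist (F n t₀) (F n (tseq n))
            + dist (F n (tseq n)) x := dist_triangle4 _ _ _ _
        _ ≤ dist (f t₀) (F n t₀) + (K * dist t₀ (tseq n) + 2 * ε n) + ε n := by
            rw [dist_comm (F n (tseq n)) x]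
            exact add_le_add (add_le_add le_rfl ha) hb.le
    have := le_of_tendsto_of_tendsto' (tendsto_const_nhds : Tendsto (fun _ : ℕ => dist (f t₀) x) U _) h1 h2
    simpa using this
  exact dist_eq_zero.mp (le_antisymm hgoal dist_nonneg)
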